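/- Let M be a loopfree matroid on ground set E, and let F_j ⊊ F_{j+1} be flats of M with rank(F_{j+1}) = rank(F_j) + 2. Then, writing V_F := -∑_{i∈F} e_i ∈ ℝ^E for any subset F ⊆ E, we have ∑_{F flat of M, F_j ⊊ F ⊊ F_{j+1}} V_F = V_{F_{j+1}} + (m - 1)·V_{F_j}, where m is the number of flats F of M with F_j ⊊ F ⊊ F_{j+1}. -/

import Mathlib

/-!
STATEMENT 1: Let M be a loopfree matroid on ground set E, and let F_j ⊊ F_{j+1} be flats
of M with rank(F_{j+1}) = rank(F_j) + 2.  Then, writing V_F := -∑_{i∈F} e_i ∈ ℝ^E for any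
subset F ⊆ E, we have
  ∑_{F flat of M, F_j ⊊ F ⊊ F_{j+1}} V_F = V_{F_{j+1}} + (m - 1)·V_{F_j},
where m is the number of flats F of M with F_j ⊊ F ⊊ F_{j+1}.
-/

namespace Stmt1

open scoped Classical

/-- The rank of a set `X` in a matroid `M`. -/
noncomputable def mrank {α : Type*} (M : Matroid α) (X : Set α) : ℕ∞ :=
  ⨆ I ∈ {I : Set α | M.Indep I ∧ I ⊆ X}, I.encard

/-- The vector `V_F = -∑_{i ∈ F} e_i` in `ℝ^E`. -/
noncomputable def VF {E : Type*} (F : Set E) : E → ℝ := fun i =>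
  if i ∈ F then (-1 : ℝ) else 0

lemma mrank_eq_of_basis {α : Type*} {M : Matroid α} {I X : Set α}
    (hX : X ⊆ M.E) (hI : M.IsBasis I X) : mrank M X = I.encard := by
  apply le_antisymm
  · refine iSup₂_le fun J hJ => ?_
    obtain ⟨J', hJ', hJJ'⟩ := hJ.1.subset_isBasis_of_subset hJ.2 hX
    calc J.encard ≤ J'.encard := Set.encard_mono hJJ'
    _ = I.encard := hJ'.encard_eq_encard hI
  · exact le_iSup₂_of_le I ⟨hI.indep, hI.subset⟩ le_rfl

lemma mrank_closure {α : Type*} {M : Matroid α} {X : Set α} (hX : X ⊆ M.E) :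
    mrank M (M.closure X) = mrank M X := by
  obtain ⟨I, hI⟩ := M.exists_isBasis X hX
  rw [mrank_eq_of_basis hX hI,
    mrank_eq_of_basis (M.closure_subset_ground X) hI.isBasis_closure_right]

lemma mrank_mono {α : Type*} (M : Matroid α) {X Y : Set α} (h : X ⊆ Y) :
    mrank M X ≤ mrank M Y :=
  iSup₂_le fun J hJ => le_iSup₂_of_le J ⟨hJ.1, hJ.2.trans h⟩ le_rfl

lemma mrank_ne_top {α : Type*} [Finite α] (M : Matroid α) (X : Set α) :
    mrank M X ≠ ⊤ := by
  refine ne_top_of_le_ne_top (b := X.encard) ?_ (iSup₂_le fun J hJ => Set.encard_mono hJ.2)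
  exact X.toFinite.encard_lt_top.ne

lemma mrank_insert_le {α : Type*} {M : Matroid α} {X : Set α} {e : α}
    (hX : insert e X ⊆ M.E) : mrank M (insert e X) ≤ mrank M X + 1 := by
  obtain ⟨I, hI⟩ := M.exists_isBasis X ((Set.subset_insert e X).trans hX)
  obtain ⟨J, hJ, hIJ⟩ := hI.indep.subset_isBasis_of_subset
    (hI.subset.trans (Set.subset_insert e X)) hX
  rw [mrank_eq_of_basis hX hJ, mrank_eq_of_basis ((Set.subset_insert e X).trans hX) hI]
  have hJsub : J ⊆ insert e I := by
    intro f hf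
    rcases eq_or_ne f e with rfl | hfe
    · exact Set.mem_insert _ _
    have hfX : f ∈ X := (hJ.subset hf).resolve_left hfe
    exact Set.mem_insert_of_mem _
      (hI.mem_of_insert_indep hfX (hJ.indep.subset (Set.insert_subset hf hIJ)))
  exact (Set.encard_mono hJsub).trans (Set.encard_insert_le _ _)

/-- For flats `F ⊆ G` with `mrank G ≤ mrank F`, we get `G ⊆ F`. -/
lemma closure_flat' {α : Type*} (M : Matroid α) (X : Set α) : M.IsFlat (M.closure X) := by
  rw [Matroid.closure_def, Set.sInter_eq_iInter]
  have hne : Nonempty {F : Set α // F ∈ {F | M.IsFlat F ∧ X ∩ M.E ⊆ F}} :=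
    ⟨⟨M.E, M.ground_isFlat, Set.inter_subset_right⟩⟩
  exact Matroid.IsFlat.iInter fun F => F.2.1

lemma flat_subset_of_mrank_le {α : Type*} [Finite α] {M : Matroid α} {F G : Set α}
    (hF : M.IsFlat F) (hG : M.IsFlat G) (hFG : F ⊆ G) (hle : mrank M G ≤ mrank M F) :
    G ⊆ F := by
  obtain ⟨I, hI⟩ := M.exists_isBasis F hF.subset_ground
  obtain ⟨J, hJ, hIJ⟩ := hI.indep.subset_isBasis_of_subset (hI.subset.trans hFG)
    hG.subset_ground
  rw [mrank_eq_of_basis hG.subset_ground hJ, mrank_eq_of_basis hF.subset_ground hI] at hle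
  have hIJ' : I = J := I.toFinite.eq_of_subset_of_encard_le hIJ hle
  have h1 : G ⊆ M.closure J := hJ.subset_closure
  have h2 : M.closure J ⊆ F := by
    rw [← hIJ']
    exact (M.closure_subset_closure hI.subset).trans_eq hF.closure
  exact h1.trans h2

lemma flat_mrank_lt {α : Type*} [Finite α] {M : Matroid α} {F G : Set α}
    (hF : M.IsFlat F) (hG : M.IsFlat G) (hFG : F ⊂ G) : mrank M F < mrank M G := by
  by_contra h
  exact hFG.not_subset (flat_subset_of_mrank_le hF hG hFG.subset (not_lt.1 h))

theorem sum_intermediate_flats {E : Type*} [Fintype E] (M : Matroid E)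
    (hE : M.E = Set.univ) (hloopfree : ∀ e : E, M.Indep {e})
    (Fj Fj1 : Set E) (hFj : M.IsFlat Fj) (hFj1 : M.IsFlat Fj1) (hss : Fj ⊂ Fj1)
    (hrk : mrank M Fj1 = mrank M Fj + 2) :
    (∑ᶠ F ∈ {F : Set E | M.IsFlat F ∧ Fj ⊂ F ∧ F ⊂ Fj1}, VF F) =
      VF Fj1 +
        (((Set.ncard {F : Set E | M.IsFlat F ∧ Fj ⊂ F ∧ F ⊂ Fj1} : ℝ)) - 1) • VF Fj := by
  set S : Set (Set E) := {F : Set E | M.IsFlat F ∧ Fj ⊂ F ∧ F ⊂ Fj1} with hS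
  have hgr : ∀ X : Set E, X ⊆ M.E := fun X => by rw [hE]; exact Set.subset_univ X
  have hne : mrank M Fj ≠ ⊤ := mrank_ne_top M Fj
  -- any intermediate flat has rank = mrank Fj + 1
  have hrkF : ∀ F ∈ S, mrank M F = mrank M Fj + 1 := by
    rintro F ⟨hF, h1, h2⟩
    have l1 := flat_mrank_lt hFj hF h1
    have l2 := flat_mrank_lt hF hFj1 h2
    rw [hrk] at l2
    have h2' : mrank M F ≤ mrank M Fj + 1 := by
      have : mrank M F < (mrank M Fj + 1) + 1 := by
        rwa [add_assoc, one_add_one_eq_two]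
      exact (ENat.lt_add_one_iff (by simpa using hne)).1 this
    exact le_antisymm h2' (Order.add_one_le_of_lt l1)
  -- existence and uniqueness of intermediate flat through i ∈ Fj1 \ Fj
  have key : ∀ i ∈ Fj1 \ Fj, ∃! F, F ∈ S ∧ i ∈ F := by
    rintro i ⟨hi1, hi0⟩
    set C := M.closure (insert i Fj) with hC
    have hCflat : M.IsFlat C := closure_flat' M _
    have hFjC : Fj ⊂ C := by
      refine ⟨(Set.subset_insert i Fj).trans (M.subset_closure _ (hgr _)), fun hsub => ?_⟩
      exact hi0 (hsub (M.subset_closure _ (hgr _) (Set.mem_insert i Fj)))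
    have hCFj1 : C ⊂ Fj1 := by
      refine ⟨?_, fun hsub => ?_⟩
      · rw [← hFj1.closure]
        exact M.closure_subset_closure (Set.insert_subset hi1 hss.subset)
      · have : mrank M Fj1 ≤ mrank M Fj + 1 := by
          calc mrank M Fj1 ≤ mrank M C := mrank_mono M hsub
          _ = mrank M (insert i Fj) := mrank_closure (hgr _)
          _ ≤ mrank M Fj + 1 := mrank_insert_le (hgr _)
        rw [hrk] at this
        have h2 : (2 : ℕ∞) ≤ 1 := (WithTop.add_le_add_iff_left hne).1 this
        norm_num at h2
    have hiC : i ∈ C := M.subset_closure _ (hgr _) (Set.mem_insert i Fj)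
    refine ⟨C, ⟨⟨hCflat, hFjC, hCFj1⟩, hiC⟩, ?_⟩
    rintro F ⟨hFS, hiF⟩
    have hCF : C ⊆ F := by
      rw [← hFS.1.closure]
      exact M.closure_subset_closure (Set.insert_subset hiF hFS.2.1.subset)
    have hle : mrank M F ≤ mrank M C := by
      rw [hrkF F hFS]
      exact Order.add_one_le_of_lt (flat_mrank_lt hFj hCflat hFjC)
    exact (flat_subset_of_mrank_le hCflat hFS.1 hCF hle).antisymm hCF |>.symm ▸ rfl
  -- convert to a Finset sum
  have hSfin : S.Finite := Set.toFinite S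
  rw [Set.ncard_eq_toFinset_card _ hSfin]
  have hconv : ∑ᶠ F ∈ S, VF F = ∑ F ∈ hSfin.toFinset, VF F := by
    rw [← finsum_mem_coe_finset, hSfin.coe_toFinset]
  rw [hconv]
  funext i
  rw [Finset.sum_apply]
  simp only [Pi.add_apply, Pi.smul_apply, smul_eq_mul]
  by_cases hij : i ∈ Fj
  · have hij1 : i ∈ Fj1 := hss.subset hij
    have : ∀ F ∈ hSfin.toFinset, VF F i = -1 := by
      intro F hF
      rw [Set.Finite.mem_toFinset] at hF
      simp [VF, hF.2.1.subset hij]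
    rw [Finset.sum_congr rfl this, Finset.sum_const]
    simp [VF, hij, hij1]
    ring
  · by_cases hij1 : i ∈ Fj1
    · obtain ⟨F₀, ⟨hF₀S, hiF₀⟩, huniq⟩ := key i ⟨hij1, hij⟩
      have hF₀mem : F₀ ∈ hSfin.toFinset := Set.Finite.mem_toFinset _ |>.2 hF₀S
      rw [Finset.sum_eq_single F₀ (fun F hF hne' => ?_) (fun h => absurd hF₀mem h)]
      · simp [VF, hiF₀, hij1, hij]
      · rw [Set.Finite.mem_toFinset] at hF
        have : i ∉ F := fun hiF => hne' (huniq F ⟨hF, hiF⟩)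
        simp [VF, this]
    · have : ∀ F ∈ hSfin.toFinset, VF F i = 0 := by
        intro F hF
        rw [Set.Finite.mem_toFinset] at hF
        have : i ∉ F := fun h => hij1 (hF.2.2.subset h)
        simp [VF, this]
      rw [Finset.sum_congr rfl this, Finset.sum_const]
      simp [VF, hij, hij1]

end Stmt1
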